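/- Let U ⊆ ℂ be a nonempty connected open set and let p : U → ℂ be holomorphic with deriv p nonvanishing on U. Then the Schwarzian derivative S(p) vanishes identically on U if and only if there exist complex numbers a, b, c, d with ad − bc ≠ 0 such that cz + d ≠ 0 and p(z) = (az + b)/(cz + d) for all z ∈ U. -/

import Mathlib

/-- The Schwarzian derivative `S(g) = g'''/g' − (3/2)(g''/g')²`. -/
noncomputable def schwarzian (g : ℂ → ℂ) (z : ℂ) : ℂ :=
  deriv (deriv (deriv g)) z / deriv g z - (3 / 2) * (deriv (deriv g) z / deriv g z) ^ 2

private lemma aux_backward (U : Set ℂ) (hU : IsOpen U) (p : ℂ → ℂ)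
    (a b c d : ℂ) (hK : a * d - b * c ≠ 0)
    (h : ∀ z ∈ U, c * z + d ≠ 0 ∧ p z = (a * z + b) / (c * z + d)) :
    ∀ z ∈ U, schwarzian p z = 0 := by
  set K := a * d - b * c with hKdef
  set W : Set ℂ := {w | c * w + d ≠ 0} with hWdef
  have hWo : IsOpen W := isOpen_ne.preimage (by continuity)
  set M : ℂ → ℂ := fun w => (a * w + b) / (c * w + d) with hMdef
  set N1 : ℂ → ℂ := fun w => K / (c * w + d) ^ 2 with hN1def
  set N2 : ℂ → ℂ := fun w => (-2) * c * K / (c * w + d) ^ 3 with hN2def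
  have hlin : ∀ w : ℂ, HasDerivAt (fun y => c * y + d) (c * 1) w := fun w =>
    ((hasDerivAt_id w).const_mul c).add_const d
  have hd1 : ∀ w ∈ W, deriv M w = N1 w := by
    intro w hw
    have h1 : HasDerivAt M ((a * 1 * (c * w + d) - (a * w + b) * (c * 1)) / (c * w + d) ^ 2) w :=
      (((hasDerivAt_id w).const_mul a).add_const b).div (hlin w) hw
    rw [h1.deriv, hN1def, hKdef]
    congr 1; ring
  have hd2 : ∀ w ∈ W, deriv N1 w = N2 w := by
    intro w hw
    have h1 : HasDerivAt N1
        ((0 * (c * w + d) ^ 2 - K * ((2 : ℕ) * (c * w + d) ^ (2 - 1) * (c * 1))) /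
          ((c * w + d) ^ 2) ^ 2) w :=
      (hasDerivAt_const w K).div ((hlin w).pow 2) (pow_ne_zero 2 hw)
    have hw0 : c * w + d ≠ 0 := hw
    rw [h1.deriv, hN2def]
    field_simp
    ring
  have hd3 : ∀ w ∈ W, deriv N2 w = 6 * c ^ 2 * K / (c * w + d) ^ 4 := by
    intro w hw
    have h1 : HasDerivAt N2
        ((0 * (c * w + d) ^ 3 - (-2) * c * K * ((3 : ℕ) * (c * w + d) ^ (3 - 1) * (c * 1))) /
          ((c * w + d) ^ 3) ^ 2) w :=
      (hasDerivAt_const w ((-2) * c * K)).div ((hlin w).pow 3) (pow_ne_zero 3 hw)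
    have hw0 : c * w + d ≠ 0 := hw
    rw [h1.deriv]
    field_simp
    ring
  intro z hz
  have hw : c * z + d ≠ 0 := (h z hz).1
  have hzW : z ∈ W := hw
  have hPM : p =ᶠ[nhds z] M :=
    Filter.eventuallyEq_of_mem (hU.mem_nhds hz) (fun w hwU => (h w hwU).2)
  have hMN1 : deriv M =ᶠ[nhds z] N1 :=
    Filter.eventuallyEq_of_mem (hWo.mem_nhds hzW) hd1
  have hN1N2 : deriv N1 =ᶠ[nhds z] N2 :=
    Filter.eventuallyEq_of_mem (hWo.mem_nhds hzW) hd2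
  have e1 : deriv p z = N1 z := by rw [hPM.deriv_eq]; exact hd1 z hzW
  have e2 : deriv (deriv p) z = N2 z := by
    rw [(hPM.deriv.trans hMN1).deriv_eq]; exact hd2 z hzW
  have e3 : deriv (deriv (deriv p)) z = 6 * c ^ 2 * K / (c * z + d) ^ 4 := by
    rw [((hPM.deriv.trans hMN1).deriv.trans hN1N2).deriv_eq]; exact hd3 z hzW
  rw [schwarzian, e1, e2, e3, hN1def, hN2def]
  field_simp
  ring


private lemma aux_const_convex {s : Set ℂ} (ho : IsOpen s) (hc : Convex ℝ s)
    {f : ℂ → ℂ} (hf : DifferentiableOn ℂ f s) (hd : ∀ z ∈ s, deriv f z = 0)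
    {x y : ℂ} (hx : x ∈ s) (hy : y ∈ s) : f x = f y := by
  refine hc.is_const_of_fderivWithin_eq_zero hf (fun z hz => ?_) hx hy
  rw [fderivWithin_of_isOpen ho hz, ← toSpanSingleton_deriv, hd z hz]
  ext t; simp

private lemma aux_const_preconnected {s : Set ℂ} (ho : IsOpen s) (hpc : IsPreconnected s)
    {f : ℂ → ℂ} (hf : AnalyticOnNhd ℂ f s) (hd : ∀ z ∈ s, deriv f z = 0)
    {x₀ : ℂ} (hx₀ : x₀ ∈ s) : ∀ z ∈ s, f z = f x₀ := by
  intro z hz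
  refine hf.eqOn_of_preconnected_of_eventuallyEq (analyticOnNhd_const) hpc hx₀ ?_ hz
  obtain ⟨ε, hε, hball⟩ := Metric.isOpen_iff.mp ho x₀ hx₀
  refine Filter.eventuallyEq_of_mem (Metric.ball_mem_nhds x₀ hε) (fun w hw => ?_)
  exact aux_const_convex Metric.isOpen_ball (convex_ball x₀ ε)
    (fun u hu => (hf u (hball hu)).differentiableAt.differentiableWithinAt)
    (fun u hu => hd u (hball hu)) hw (Metric.mem_ball_self hε)

private lemma aux_forward (U : Set ℂ) (hU : IsOpen U) (hne : U.Nonempty) (hconn : IsConnected U)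
    (p : ℂ → ℂ) (hp : DifferentiableOn ℂ p U) (hp' : ∀ z ∈ U, deriv p z ≠ 0)
    (hS : ∀ z ∈ U, schwarzian p z = 0) :
    ∃ a b c d : ℂ, a * d - b * c ≠ 0 ∧
      ∀ z ∈ U, c * z + d ≠ 0 ∧ p z = (a * z + b) / (c * z + d) := by
  have hpre : IsPreconnected U := hconn.isPreconnected
  have hpa : AnalyticOnNhd ℂ p U := hp.analyticOnNhd hU
  have d1 : AnalyticOnNhd ℂ (deriv p) U := hpa.deriv
  have d2 : AnalyticOnNhd ℂ (deriv (deriv p)) U := d1.deriv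
  have d3 : AnalyticOnNhd ℂ (deriv (deriv (deriv p))) U := d2.deriv
  set q : ℂ → ℂ := fun z => deriv (deriv p) z / deriv p z with hqdef
  have hqa : AnalyticOnNhd ℂ q U := d2.div d1 hp'
  -- the Schwarzian ODE: q' = q^2/2 on U
  have hdq : ∀ z ∈ U, deriv q z = q z ^ 2 / 2 := by
    intro z hz
    have hpz : deriv p z ≠ 0 := hp' z hz
    have h0 := hS z hz
    rw [schwarzian, sub_eq_zero] at h0
    have e1 : deriv q z =
        (deriv (deriv (deriv p)) z * deriv p z - deriv (deriv p) z * deriv (deriv p) z) /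
          deriv p z ^ 2 :=
      deriv_div (d2 z hz).differentiableAt (d1 z hz).differentiableAt hpz
    field_simp at h0
    rw [e1, hqdef]
    field_simp
    linear_combination h0
  -- derivative of r = 2/q + id vanishes wherever q ≠ 0
  have hr0 : ∀ z ∈ U, q z ≠ 0 → HasDerivAt (fun w => 2 / q w + w) 0 z := by
    intro z hz hqz
    have hq' : HasDerivAt q (deriv q z) z := (hqa z hz).differentiableAt.hasDerivAt
    have h1 : HasDerivAt (fun w => 2 / q w + w)
        ((0 * q z - 2 * deriv q z) / q z ^ 2 + 1) z :=
      ((hasDerivAt_const z 2).div hq' hqz).add (hasDerivAt_id z)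
    have hv : (0 * q z - 2 * deriv q z) / q z ^ 2 + 1 = 0 := by
      rw [hdq z hz]
      field_simp
      ring
    rwa [hv] at h1
  by_cases hq0 : ∀ z ∈ U, q z = 0
  · -- Case A : p is affine
    obtain ⟨z₀, hz₀⟩ := hne
    have hdd : ∀ z ∈ U, deriv (deriv p) z = 0 := by
      intro z hz
      have h1 := hq0 z hz
      rw [hqdef] at h1
      rcases div_eq_zero_iff.mp h1 with h | h
      · exact h
      · exact absurd h (hp' z hz)
    have hK : ∀ z ∈ U, deriv p z = deriv p z₀ :=
      aux_const_preconnected hU hpre d1 hdd hz₀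
    set K := deriv p z₀ with hKdef
    have hKne : K ≠ 0 := hp' z₀ hz₀
    have hg : AnalyticOnNhd ℂ (fun z => p z - K * z) U :=
      hpa.sub (analyticOnNhd_const.mul analyticOnNhd_id)
    have hgd : ∀ z ∈ U, deriv (fun w => p w - K * w) z = 0 := by
      intro z hz
      have h1 : HasDerivAt (fun w => p w - K * w) (deriv p z - K * 1) z :=
        ((hpa z hz).differentiableAt.hasDerivAt).sub ((hasDerivAt_id z).const_mul K)
      rw [h1.deriv, hK z hz]
      ring
    have hB := aux_const_preconnected hU hpre hg hgd hz₀
    refine ⟨K, p z₀ - K * z₀, 0, 1, by simpa using hKne, fun z hz => ⟨by simp, ?_⟩⟩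
    have h2 := hB z hz
    rw [zero_mul, zero_add, div_one]
    linear_combination h2
  · -- Case B : q never vanishes
    push_neg at hq0
    obtain ⟨z₁, hz₁, hq1⟩ := hq0
    have hqn : ∀ z ∈ U, q z ≠ 0 := by
      intro z0 hz0 h0
      rcases (hqa z0 hz0).eventually_eq_zero_or_eventually_ne_zero with hev | hev
      · refine hq1 (hqa.eqOn_zero_of_preconnected_of_frequently_eq_zero hpre hz0
          ((hev.filter_mono nhdsWithin_le_nhds).frequently) hz₁)
      · -- q has an isolated zero at z0 : contradiction via the ODE
        have h2 : ∀ᶠ w in nhds z0, (w ≠ z0 → q w ≠ 0) ∧ w ∈ U :=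
          (eventually_nhdsWithin_iff.mp hev).and (hU.mem_nhds hz0)
        obtain ⟨ε, hε, hball⟩ := Metric.eventually_nhds_iff.mp h2
        set W : Set ℂ := Metric.ball z0 ε ∩ {w | z0.re < w.re} with hWdef
        have hWo : IsOpen W :=
          Metric.isOpen_ball.inter (isOpen_lt continuous_const Complex.continuous_re)
        have hWc : Convex ℝ W := (convex_ball z0 ε).inter (convex_halfSpace_re_gt z0.re)
        have hWU : ∀ w ∈ W, w ∈ U := fun w hw => (hball (Metric.mem_ball.mp hw.1)).2
        have hWq : ∀ w ∈ W, q w ≠ 0 := by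
          intro w hw
          refine (hball (Metric.mem_ball.mp hw.1)).1 (fun hwz => ?_)
          have h8 : z0.re < w.re := hw.2
          rw [hwz] at h8
          exact lt_irrefl _ h8
        set zb : ℂ := z0 + ((ε / 2 : ℝ) : ℂ) with hzbdef
        have hdistf : ∀ t : ℝ, dist (z0 + (t : ℂ)) z0 = |t| := by
          intro t
          rw [Complex.dist_eq, show z0 + (t : ℂ) - z0 = (t : ℂ) by ring, Complex.norm_real, Real.norm_eq_abs]
        have hzb : zb ∈ W := by
          constructor
          · rw [Metric.mem_ball, hzbdef, hdistf, abs_of_pos (half_pos hε)]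
            linarith
          · simp only [hzbdef, Set.mem_setOf_eq, Complex.add_re, Complex.ofReal_re]
            linarith
        set c0 : ℂ := 2 / q zb + zb with hc0def
        have hrc : ∀ w ∈ W, 2 / q w + w = c0 := by
          intro w hw
          exact aux_const_convex hWo hWc
            (fun u hu => (hr0 u (hWU u hu) (hWq u hu)).differentiableAt.differentiableWithinAt)
            (fun u hu => (hr0 u (hWU u hu) (hWq u hu)).deriv) hw hzb
        have hkey : ∀ w ∈ W, q w * (c0 - w) = 2 := by
          intro w hw
          have h3 := hrc w hw
          have h4 : c0 - w = 2 / q w := by rw [← h3]; ring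
          rw [h4, mul_div_cancel₀ _ (hWq w hw)]
        have hcl : z0 ∈ closure W := by
          rw [Metric.mem_closure_iff]
          intro δ hδ
          have hm : (0:ℝ) < min δ ε := lt_min hδ hε
          refine ⟨z0 + ((min δ ε / 2 : ℝ) : ℂ), ⟨?_, ?_⟩, ?_⟩
          · rw [Metric.mem_ball, hdistf, abs_of_pos (by linarith)]
            have := min_le_right δ ε
            linarith
          · simp only [Set.mem_setOf_eq, Complex.add_re, Complex.ofReal_re]
            linarith
          · rw [dist_comm, hdistf, abs_of_pos (by linarith)]
            have := min_le_left δ ε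
            linarith
        haveI hNB : (nhdsWithin z0 W).NeBot := mem_closure_iff_nhdsWithin_neBot.mp hcl
        set F : ℂ → ℂ := fun w => q w * (c0 - w) with hFdef
        have hFc : ContinuousAt F z0 :=
          ((hqa z0 hz0).continuousAt).mul ((continuous_const.sub continuous_id).continuousAt)
        have hlim1 : Filter.Tendsto F (nhdsWithin z0 W) (nhds (F z0)) :=
          hFc.continuousWithinAt.tendsto
        have hlim2 : Filter.Tendsto F (nhdsWithin z0 W) (nhds 2) := by
          refine Filter.Tendsto.congr' ?_ tendsto_const_nhds
          filter_upwards [self_mem_nhdsWithin] with w hw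
          exact (hkey w hw).symm
        have h5 : F z0 = 2 := tendsto_nhds_unique hlim1 hlim2
        rw [hFdef] at h5
        simp only [h0, zero_mul] at h5
        exact two_ne_zero h5.symm
    -- now q z = 2/(c0 - z) globally
    obtain ⟨z₀, hz₀⟩ := hne
    have hranal : AnalyticOnNhd ℂ (fun w => 2 / q w + w) U :=
      (analyticOnNhd_const.div hqa hqn).add analyticOnNhd_id
    set c0 : ℂ := 2 / q z₀ + z₀ with hc0def
    have hrc : ∀ z ∈ U, 2 / q z + z = c0 :=
      aux_const_preconnected hU hpre hranal (fun z hz => (hr0 z hz (hqn z hz)).deriv) hz₀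
    have hc0 : ∀ z ∈ U, c0 - z ≠ 0 ∧ q z * (c0 - z) = 2 := by
      intro z hz
      have h3 := hrc z hz
      have h4 : c0 - z = 2 / q z := by rw [← h3]; ring
      refine ⟨by rw [h4]; exact div_ne_zero two_ne_zero (hqn z hz), ?_⟩
      rw [h4, mul_div_cancel₀ _ (hqn z hz)]
    -- p' (c0 - z)^2 is constant
    have hpp : ∀ z ∈ U, deriv (deriv p) z = q z * deriv p z := by
      intro z hz
      have hpz := hp' z hz
      rw [hqdef]
      exact (div_mul_cancel₀ _ hpz).symm
    have hs0 : ∀ z ∈ U, HasDerivAt (fun w => deriv p w * (c0 - w) ^ 2) 0 z := by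
      intro z hz
      have h1 : HasDerivAt (deriv p) (deriv (deriv p) z) z :=
        (d1 z hz).differentiableAt.hasDerivAt
      have h2 : HasDerivAt (fun w => (c0 - w) ^ 2) ((2 : ℕ) * (c0 - z) ^ (2 - 1) * (0 - 1)) z :=
        ((hasDerivAt_const z c0).sub (hasDerivAt_id z)).pow 2
      have h3 := h1.mul h2
      have hv : deriv (deriv p) z * (c0 - z) ^ 2 +
          deriv p z * ((2 : ℕ) * (c0 - z) ^ (2 - 1) * (0 - 1)) = 0 := by
        rw [hpp z hz]
        have h4 := (hc0 z hz).2
        push_cast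
        linear_combination (deriv p z * (c0 - z)) * h4
      rwa [hv] at h3
    have hsanal : AnalyticOnNhd ℂ (fun w => deriv p w * (c0 - w) ^ 2) U :=
      d1.mul ((analyticOnNhd_const.sub analyticOnNhd_id).pow 2)
    set K : ℂ := deriv p z₀ * (c0 - z₀) ^ 2 with hKdef
    have hKne : K ≠ 0 := mul_ne_zero (hp' z₀ hz₀) (pow_ne_zero 2 (hc0 z₀ hz₀).1)
    have hsc : ∀ z ∈ U, deriv p z * (c0 - z) ^ 2 = K :=
      aux_const_preconnected hU hpre hsanal (fun z hz => (hs0 z hz).deriv) hz₀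
    -- p + K/(z - c0) is constant
    have ht0 : ∀ z ∈ U, HasDerivAt (fun w => p w - K / (c0 - w)) 0 z := by
      intro z hz
      have hcz := (hc0 z hz).1
      have h1 : HasDerivAt p (deriv p z) z := (hpa z hz).differentiableAt.hasDerivAt
      have h2 : HasDerivAt (fun w => K / (c0 - w))
          ((0 * (c0 - z) - K * (0 - 1)) / (c0 - z) ^ 2) z :=
        (hasDerivAt_const z K).div ((hasDerivAt_const z c0).sub (hasDerivAt_id z)) hcz
      have h3 := h1.sub h2
      have hv : deriv p z - (0 * (c0 - z) - K * (0 - 1)) / (c0 - z) ^ 2 = 0 := by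
        have h4 := hsc z hz
        field_simp
        linear_combination h4
      rwa [hv] at h3
    have htanal : AnalyticOnNhd ℂ (fun w => p w - K / (c0 - w)) U :=
      hpa.sub (analyticOnNhd_const.div (analyticOnNhd_const.sub analyticOnNhd_id)
        (fun z hz => (hc0 z hz).1))
    set A : ℂ := p z₀ - K / (c0 - z₀) with hAdef
    have htc : ∀ z ∈ U, p z - K / (c0 - z) = A :=
      aux_const_preconnected hU hpre htanal (fun z hz => (ht0 z hz).deriv) hz₀
    refine ⟨-A, A * c0 + K, -1, c0, ?_, fun z hz => ⟨?_, ?_⟩⟩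
    · have he : -A * c0 - (A * c0 + K) * (-1) = K := by ring
      rw [he]
      exact hKne
    · have := (hc0 z hz).1
      rw [show (-1 : ℂ) * z + c0 = c0 - z by ring]
      exact this
    · have hcz := (hc0 z hz).1
      have h6 := htc z hz
      rw [show (-1 : ℂ) * z + c0 = c0 - z by ring, eq_div_iff hcz]
      field_simp at h6
      linear_combination h6


/-- On a nonempty connected open set `U`, a holomorphic function `p` with
nonvanishing derivative has identically vanishing Schwarzian derivative on `U`
if and only if `p` is the restriction to `U` of a Möbius transformation
`z ↦ (az + b)/(cz + d)` with `ad − bc ≠ 0` (and `cz + d ≠ 0` on `U`). -/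
theorem stmt_13 (U : Set ℂ) (hU : IsOpen U) (hne : U.Nonempty) (hconn : IsConnected U)
    (p : ℂ → ℂ) (hp : DifferentiableOn ℂ p U) (hp' : ∀ z ∈ U, deriv p z ≠ 0) :
    (∀ z ∈ U, schwarzian p z = 0) ↔
      ∃ a b c d : ℂ, a * d - b * c ≠ 0 ∧
        ∀ z ∈ U, c * z + d ≠ 0 ∧ p z = (a * z + b) / (c * z + d) := by
  constructor
  · exact aux_forward U hU hne hconn p hp hp'
  · rintro ⟨a, b, c, d, hK, h⟩
    exact aux_backward U hU p a b c d hK h
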